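/- Assume π is a positive continuous probability density on ℝ, q(x,y) := Δ(|x−y|) where Δ : ℝ → [0,∞) is continuous, supported on [−s,s] and positive on (−s,s) with ∫_ℝ Δ(|u|)du = 1, and there exists θ > 0 such that π is increasing on (−∞,−θ] and decreasing on [θ,+∞). Then sup_{x∈ℝ} r(x) < 1; in particular, for every a > 0, r_a := sup_{|x|≤a} r(x) < 1 and r_a' := sup_{|x|>a} r(x) < 1. -/

import Mathlib

open MeasureTheory Filter Topology

noncomputable section

/-- The probability measure on `ℝ` with density `π` w.r.t. Lebesgue measure. -/
def piMeas (π : ℝ → ℝ) : Measure ℝ := volume.withDensity fun x => ENNReal.ofReal (π x)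

/-- `t(x,y) = min(q(x,y), π(y) q(y,x) / π(x))`. -/
def mhT (π : ℝ → ℝ) (q : ℝ → ℝ → ℝ) (x y : ℝ) : ℝ := min (q x y) (π y * q y x / π x)

/-- The rejection probability `r(x) = 1 - ∫ t(x,y) dy`. -/
def mhR (π : ℝ → ℝ) (q : ℝ → ℝ → ℝ) (x : ℝ) : ℝ := 1 - ∫ y, mhT π q x y
theorem sup_r_lt_one_monotone_tails
    (s : ℝ) (hs : 0 < s)
    (Δ : ℝ → ℝ) (hΔnn : ∀ u, 0 ≤ Δ u) (hΔcont : Continuous Δ)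
    (hΔsupp : ∀ u, s < |u| → Δ u = 0)
    (hΔpos : ∀ u ∈ Set.Ioo (-s) s, 0 < Δ u)
    (hΔint : ∫ u, Δ |u| = 1)
    (π : ℝ → ℝ) (hπpos : ∀ x, 0 < π x) (hπcont : Continuous π)
    (hπprob : ∫ x, π x = 1)
    (θ : ℝ) (hθ : 0 < θ)
    (hπmono : MonotoneOn π (Set.Iic (-θ)))
    (hπanti : AntitoneOn π (Set.Ici θ)) :
    sSup (Set.range (mhR π fun x y => Δ |x - y|)) < 1 ∧
      ∀ a : ℝ, 0 < a →
        sSup ((mhR π fun x y => Δ |x - y|) '' {x | |x| ≤ a}) < 1 ∧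
        sSup ((mhR π fun x y => Δ |x - y|) '' {x | a < |x|}) < 1 := by
  -- minimum of Δ on [0, s/2]
  obtain ⟨u₀, hu₀mem, hu₀min⟩ :=
    (isCompact_Icc (a := (0:ℝ)) (b := s/2)).exists_isMinOn
      ⟨0, by constructor <;> linarith⟩ hΔcont.continuousOn
  have hδ : 0 < Δ u₀ := hΔpos u₀ ⟨by linarith [hu₀mem.1], by linarith [hu₀mem.2]⟩
  -- min and max of π on K = [-(θ+s), θ+s]
  have hKne : (Set.Icc (-(θ+s)) (θ+s)).Nonempty := ⟨0, by constructor <;> linarith⟩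
  obtain ⟨p, hpmem, hpmin⟩ :=
    (isCompact_Icc (a := -(θ+s)) (b := θ+s)).exists_isMinOn hKne hπcont.continuousOn
  obtain ⟨P, hPmem, hPmax⟩ :=
    (isCompact_Icc (a := -(θ+s)) (b := θ+s)).exists_isMaxOn hKne hπcont.continuousOn
  have hm : 0 < π p := hπpos p
  have hM : 0 < π P := hπpos P
  have hmM : π p ≤ π P := hpmin hPmem
  set c : ℝ := Δ u₀ * (π p / π P) with hc_def
  have hc : 0 < c := mul_pos hδ (div_pos hm hM)
  set ε : ℝ := c * (s/2) with hε_def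
  have hε : 0 < ε := mul_pos hc (by linarith)
  have hr1 : π p / π P ≤ 1 := (div_le_one hM).mpr hmM
  -- pointwise bound
  have ratio_bound : ∀ x y : ℝ, |x - y| ≤ s/2 → π p / π P ≤ π y / π x →
      c ≤ mhT π (fun x y => Δ |x - y|) x y := by
    intro x y h1 h2
    have hfx : Δ u₀ ≤ Δ |x - y| := hu₀min ⟨abs_nonneg _, h1⟩
    have hx : 0 < π x := hπpos x
    have hy : 0 < π y := hπpos y
    show c ≤ min (Δ |x - y|) (π y * Δ |y - x| / π x)
    rw [abs_sub_comm y x]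
    refine le_min ?_ ?_
    · calc c = Δ u₀ * (π p / π P) := rfl
        _ ≤ Δ u₀ * 1 := by
            exact mul_le_mul_of_nonneg_left hr1 (hΔnn u₀)
        _ = Δ u₀ := mul_one _
        _ ≤ Δ |x - y| := hfx
    · have h3 : Δ u₀ * (π p / π P) ≤ Δ |x - y| * (π y / π x) :=
        mul_le_mul hfx h2 (div_nonneg hm.le hM.le) (hΔnn _)
      calc c = Δ u₀ * (π p / π P) := rfl
        _ ≤ Δ |x - y| * (π y / π x) := h3
        _ = π y * Δ |x - y| / π x := by ring
  -- the key uniform bound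
  have key : ∀ x, mhR π (fun x y => Δ |x - y|) x ≤ 1 - ε := by
    intro x
    -- choose an interval on which mhT is at least c
    have main : ∃ a : ℝ, ∀ y ∈ Set.Icc a (a + s/2),
        c ≤ mhT π (fun x y => Δ |x - y|) x y := by
      rcases le_or_gt x (-(θ + s/2)) with hx1 | hx1
      · refine ⟨x, fun y hy => ?_⟩
        obtain ⟨hy1, hy2⟩ := hy
        have hxK : x ∈ Set.Iic (-θ) := by simp only [Set.mem_Iic]; linarith
        have hyK : y ∈ Set.Iic (-θ) := by simp only [Set.mem_Iic]; linarith
        have hxy : π x ≤ π y := hπmono hxK hyK hy1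
        refine ratio_bound x y (abs_le.mpr ⟨by linarith, by linarith⟩) ?_
        exact le_trans hr1 ((one_le_div (hπpos x)).mpr hxy)
      · rcases le_or_gt (θ + s/2) x with hx2 | hx2
        · refine ⟨x - s/2, fun y hy => ?_⟩
          obtain ⟨hy1, hy2⟩ := hy
          have hy2' : y ≤ x := by linarith
          have hxK : x ∈ Set.Ici θ := by simp only [Set.mem_Ici]; linarith
          have hyK : y ∈ Set.Ici θ := by simp only [Set.mem_Ici]; linarith
          have hxy : π x ≤ π y := hπanti hyK hxK hy2'
          refine ratio_bound x y (abs_le.mpr ⟨by linarith, by linarith⟩) ?_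
          exact le_trans hr1 ((one_le_div (hπpos x)).mpr hxy)
        · refine ⟨x, fun y hy => ?_⟩
          obtain ⟨hy1, hy2⟩ := hy
          have hxK : x ∈ Set.Icc (-(θ+s)) (θ+s) := ⟨by linarith, by linarith⟩
          have hyK : y ∈ Set.Icc (-(θ+s)) (θ+s) := ⟨by linarith, by linarith⟩
          refine ratio_bound x y (abs_le.mpr ⟨by linarith, by linarith⟩) ?_
          exact div_le_div₀ (hπpos y).le (hpmin hyK) (hπpos x) (hPmax hxK)
    obtain ⟨a, hI⟩ := main
    set t : ℝ → ℝ := fun y => mhT π (fun x y => Δ |x - y|) x y with ht_def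
    have htnn : ∀ y, 0 ≤ t y := fun y =>
      le_min (hΔnn _) (div_nonneg (mul_nonneg (hπpos y).le (hΔnn _)) (hπpos x).le)
    have hcont_t : Continuous t := by
      apply Continuous.min
      · exact hΔcont.comp (continuous_abs.comp (continuous_const.sub continuous_id))
      · exact ((hπcont.mul (hΔcont.comp
          (continuous_abs.comp (continuous_id.sub continuous_const)))).div_const _)
    have hsupp : HasCompactSupport t := by
      apply HasCompactSupport.intro (isCompact_Icc (a := x - s) (b := x + s))
      intro y hy
      simp only [Set.mem_Icc, not_and_or, not_le] at hy
      have h1 : s < |x - y| := by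
        rcases hy with h | h
        · exact lt_of_lt_of_le (by linarith) (le_abs_self (x - y))
        · exact lt_of_lt_of_le (by linarith) (neg_le_abs (x - y))
      have h2 : s < |y - x| := by rwa [abs_sub_comm]
      show min (Δ |x - y|) (π y * Δ |y - x| / π x) = 0
      rw [hΔsupp |x - y| (by rwa [abs_abs]), hΔsupp |y - x| (by rwa [abs_abs])]
      simp
    have hint : Integrable t := hcont_t.integrable_of_hasCompactSupport hsupp
    have h1 : ∫ y in Set.Icc a (a + s/2), t y ≤ ∫ y, t y :=
      setIntegral_le_integral hint (Eventually.of_forall htnn)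
    have hμfin : volume (Set.Icc a (a + s/2)) ≠ ⊤ := by
      rw [Real.volume_Icc]; exact ENNReal.ofReal_ne_top
    have h2 : c * (volume (Set.Icc a (a + s/2))).toReal ≤ ∫ y in Set.Icc a (a + s/2), t y :=
      setIntegral_ge_of_const_le_real measurableSet_Icc hμfin hI hint.integrableOn
    have hvol : (volume (Set.Icc a (a + s/2))).toReal = s/2 := by
      rw [Real.volume_Icc, ENNReal.toReal_ofReal (by linarith)]; ring
    rw [hvol] at h2
    have hεle : ε ≤ ∫ y, t y := le_trans h2 h1
    unfold mhR
    have : (∫ y, mhT π (fun x y => Δ |x - y|) x y) = ∫ y, t y := rfl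
    rw [this]
    linarith
  refine ⟨?_, fun a ha => ⟨?_, ?_⟩⟩
  · have := csSup_le (Set.range_nonempty (mhR π fun x y => Δ |x - y|))
      (by rintro y ⟨x, rfl⟩; exact key x)
    linarith
  · have hne : ((mhR π fun x y => Δ |x - y|) '' {x | |x| ≤ a}).Nonempty :=
      ⟨_, ⟨0, by simp [abs_of_nonneg, ha.le], rfl⟩⟩
    have := csSup_le hne (by rintro y ⟨x, _, rfl⟩; exact key x)
    linarith
  · have hne : ((mhR π fun x y => Δ |x - y|) '' {x | a < |x|}).Nonempty :=
      ⟨_, ⟨a + 1, by simp only [Set.mem_setOf_eq]; rw [abs_of_pos (by linarith)]; linarith, rfl⟩⟩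
    have := csSup_le hne (by rintro y ⟨x, _, rfl⟩; exact key x)
    linarith
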